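/- Let α > 0 and suppose αn + α/2 is never an integer for any n ∈ ℕ. If m = ⌊αn + α/2⌋ for some n ∈ ℕ and α = p/q with p = αq, then p − 1 − m = ⌊α(q − n − 1) + α/2⌋. -/

import Mathlib

/-- Symmetry of the period: if `α * n + α/2` is never an integer, `p = α * q`, and
`m = ⌊α * n + α/2⌋` with `n < q`, then `p - 1 - m = ⌊α * (q - n - 1) + α/2⌋`. -/
theorem stmt_9 (α : ℝ) (hα : 0 < α) (hint : ∀ n : ℕ, ¬ ∃ z : ℤ, α * n + α / 2 = (z : ℝ))
    (p q : ℕ) (hq : 0 < q) (hpq : (p : ℝ) = α * q) (n : ℕ) (hn : n < q)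
    (m : ℤ) (hm : m = ⌊α * n + α / 2⌋) :
    (p : ℤ) - 1 - m = ⌊α * ((q : ℝ) - (n : ℝ) - 1) + α / 2⌋ := by
  set x : ℝ := α * n + α / 2 with hx
  have hxe : α * ((q : ℝ) - (n : ℝ) - 1) + α / 2 = -(x - ((p : ℤ) : ℝ)) := by
    push_cast
    rw [hpq]; ring
  have hne : x ≠ (⌊x⌋ : ℝ) := fun h => hint n ⟨⌊x⌋, h⟩
  have hlt : (⌊x⌋ : ℝ) < x := lt_of_le_of_ne (Int.floor_le x) (Ne.symm hne)
  have hceil : ⌈x⌉ = ⌊x⌋ + 1 :=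
    le_antisymm (Int.ceil_le_floor_add_one x) (Int.le_ceil_iff.mpr (by push_cast; simpa using hlt))
  rw [hxe, Int.floor_neg, Int.ceil_sub_intCast, hceil, hm]
  ring
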